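/- (Vanishing tail of the potential energy) Let 0 < s < 1 and F satisfy: for every ε > 0 there exist R₀, s₀ > 0 with F(r,t) ≤ ε t² for a.e. r ≥ R₀ and 0 ≤ t < s₀. Let {u_m} be a sequence of nonnegative Schwarz symmetric functions with ‖u_m‖_{L²} = c. Then lim_{R→∞} sup_m ∫_{|x|>R} F(|x|, u_m(x)) dx = 0. -/

import Mathlib

open MeasureTheory

def SchwarzSymmetric {n : ℕ} (v : EuclideanSpace ℝ (Fin n) → ℝ) : Prop :=
  (∀ x y : EuclideanSpace ℝ (Fin n), ‖x‖ = ‖y‖ → v x = v y) ∧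
  (∀ x y : EuclideanSpace ℝ (Fin n), ‖x‖ ≤ ‖y‖ → v y ≤ v x)

open Metric in
/-- If `N ⊆ ℝ` is a null measurable set, then the set of points of `ℝⁿ` (with `n > 0`)
whose norm lies in `N` is null. -/
lemma norm_mem_null {n : ℕ} (hn : 0 < n) {N : Set ℝ} (hNm : MeasurableSet N)
    (hN : volume N = 0) :
    volume {x : EuclideanSpace ℝ (Fin n) | ‖x‖ ∈ N} = 0 := by
  set E := EuclideanSpace ℝ (Fin n)
  haveI : Nontrivial E :=
    Module.nontrivial_of_finrank_pos (R := ℝ) (by rw [finrank_euclideanSpace_fin]; exact hn)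
  set μ : Measure E := volume with hμ
  have hmp := Measure.measurePreserving_homeomorphUnitSphereProd μ
  set T : Set (sphere (0 : E) 1 × Set.Ioi (0 : ℝ)) := Set.univ ×ˢ (Subtype.val ⁻¹' N) with hT
  have hTm : MeasurableSet T := MeasurableSet.univ.prod (measurable_subtype_coe hNm)
  have hpre : (homeomorphUnitSphereProd E) ⁻¹' T
      = Subtype.val ⁻¹' {x : E | ‖x‖ ∈ N} := by
    ext x
    simp [hT, Set.mem_preimage]
  have h2 : (Measure.volumeIoiPow (Module.finrank ℝ E - 1)) (Subtype.val ⁻¹' N) = 0 := by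
    rw [Measure.volumeIoiPow, withDensity_apply _ (measurable_subtype_coe hNm)]
    have h0 : (Measure.comap Subtype.val volume : Measure (Set.Ioi (0 : ℝ)))
        (Subtype.val ⁻¹' N) = 0 := by
      rw [MeasurableEmbedding.comap_apply
        (MeasurableEmbedding.subtype_coe measurableSet_Ioi)]
      exact measure_mono_null (Set.image_preimage_subset _ _) hN
    exact setLIntegral_measure_zero _ _ h0
  have h1 : (μ.comap Subtype.val) ((homeomorphUnitSphereProd E) ⁻¹' T) = 0 := by
    rw [hmp.measure_preimage hTm.nullMeasurableSet, Measure.prod_prod, h2, mul_zero]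
  have h3 : μ ((Subtype.val : ({0}ᶜ : Set E) → E) ''
      (Subtype.val ⁻¹' {x : E | ‖x‖ ∈ N})) = 0 := by
    rw [← comap_subtype_coe_apply (measurableSet_singleton (0 : E)).compl,
      ← hpre, h1]
  have h4 : {x : E | ‖x‖ ∈ N}
      ⊆ ((Subtype.val : ({0}ᶜ : Set E) → E) ''
        (Subtype.val ⁻¹' {x : E | ‖x‖ ∈ N})) ∪ {0} := by
    intro x hx
    by_cases h : x = 0
    · exact Or.inr h
    · exact Or.inl ⟨⟨x, h⟩, hx, rfl⟩
  refine measure_mono_null h4 ?_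
  refine measure_union_null h3 (measure_singleton _)

/-- Vanishing tail of the potential energy: if for every `ε > 0` there are `R₀, s₀ > 0`
with `F(r,t) ≤ ε t²` for a.e. `r ≥ R₀` and `0 ≤ t < s₀`, and `u_m` is a sequence of
nonnegative Schwarz symmetric functions with `‖u_m‖_{L²} = c`, then
`lim_{R→∞} sup_m ∫_{|x|>R} F(|x|, u_m(x)) dx = 0`. -/
theorem stmt_17 (n : ℕ) (hn : 0 < n) (s c : ℝ) (hs0 : 0 < s) (hs1 : s < 1) (hc : 0 < c)
    (F : ℝ → ℝ → ℝ) (hF0 : ∀ r t : ℝ, 0 ≤ r → 0 ≤ t → 0 ≤ F r t)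
    (hF3 : ∀ ε : ℝ, 0 < ε → ∃ R₀ s₀ : ℝ, 0 < R₀ ∧ 0 < s₀ ∧
      ∀ᵐ r ∂(volume.restrict (Set.Ici R₀)),
        ∀ t : ℝ, 0 ≤ t → t < s₀ → F r t ≤ ε * t ^ 2)
    (u : ℕ → EuclideanSpace ℝ (Fin n) → ℝ)
    (hu0 : ∀ m x, 0 ≤ u m x) (husym : ∀ m, SchwarzSymmetric (u m))
    (hu2 : ∀ m, MemLp (u m) 2) (hnorm : ∀ m, ∫ x, (u m x) ^ 2 = c ^ 2) :
    ∀ ε : ℝ, 0 < ε → ∃ R₁ : ℝ, ∀ R : ℝ, R₁ ≤ R → ∀ m : ℕ,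
      (∫⁻ x in {x : EuclideanSpace ℝ (Fin n) | R < ‖x‖},
        ENNReal.ofReal (F ‖x‖ (u m x))) ≤ ENNReal.ofReal ε := by
  intro ε hε
  haveI : Nontrivial (EuclideanSpace ℝ (Fin n)) :=
    Module.nontrivial_of_finrank_pos (R := ℝ) (by rw [finrank_euclideanSpace_fin]; exact hn)
  have hc2 : (0 : ℝ) < c ^ 2 := by positivity
  set ε' : ℝ := ε / c ^ 2 with hε'def
  have hε' : 0 < ε' := div_pos hε hc2
  obtain ⟨R₀, s₀, hR₀, hs₀, hae⟩ := hF3 ε' hε'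
  -- integrability of squares
  have hint : ∀ m, Integrable (fun y : EuclideanSpace ℝ (Fin n) => (u m y) ^ 2) := fun m => (hu2 m).integrable_sq
  -- uniform decay: (u m x)^2 * vol(ball 0 ‖x‖) ≤ c^2
  have key : ∀ m (x : EuclideanSpace ℝ (Fin n)),
      (u m x) ^ 2 * (volume (Metric.ball (0 : EuclideanSpace ℝ (Fin n)) ‖x‖)).toReal ≤ c ^ 2 := by
    intro m x
    have h1 : ∫ _ in Metric.ball (0 : EuclideanSpace ℝ (Fin n)) ‖x‖, (u m x) ^ 2
        ≤ ∫ y in Metric.ball (0 : EuclideanSpace ℝ (Fin n)) ‖x‖, (u m y) ^ 2 := by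
      refine setIntegral_mono_on
        (integrableOn_const measure_ball_lt_top.ne)
        (hint m).integrableOn measurableSet_ball ?_
      intro y hy
      have hyx : ‖y‖ ≤ ‖x‖ := by
        simpa [dist_eq_norm] using (Metric.mem_ball.1 hy).le
      have := (husym m).2 y x hyx
      exact pow_le_pow_left₀ (hu0 m x) this 2
    rw [setIntegral_const, smul_eq_mul] at h1
    have h2 : ∫ y in Metric.ball (0 : EuclideanSpace ℝ (Fin n)) ‖x‖, (u m y) ^ 2 ≤ c ^ 2 := by
      rw [← hnorm m]
      exact setIntegral_le_integral (hint m)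
        (Filter.Eventually.of_forall fun y => by positivity)
    calc (u m x) ^ 2 * (volume (Metric.ball (0 : EuclideanSpace ℝ (Fin n)) ‖x‖)).toReal
        = (volume (Metric.ball (0 : EuclideanSpace ℝ (Fin n)) ‖x‖)).toReal * (u m x) ^ 2 := mul_comm _ _
      _ ≤ c ^ 2 := h1.trans h2
  -- volume of unit ball
  set B : ℝ := (volume (Metric.ball (0 : EuclideanSpace ℝ (Fin n)) 1)).toReal with hB
  have hBpos : 0 < B :=
    ENNReal.toReal_pos (Metric.measure_ball_pos volume (0:EuclideanSpace ℝ (Fin n)) one_pos).ne' measure_ball_lt_top.ne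
  -- choose R₂ with decay below s₀
  set R₂ : ℝ := max 1 ((c ^ 2 / s₀ ^ 2 + 1) / B) with hR₂
  have hsmall : ∀ (x : EuclideanSpace ℝ (Fin n)), R₂ ≤ ‖x‖ → ∀ m, u m x < s₀ := by
    intro x hx m
    have hx1 : (1 : ℝ) ≤ ‖x‖ := le_trans (le_max_left _ _) hx
    have hx0 : 0 ≤ ‖x‖ := by linarith
    have hvol : (volume (Metric.ball (0 : EuclideanSpace ℝ (Fin n)) ‖x‖)).toReal = ‖x‖ ^ n * B := by
      rw [Measure.addHaar_ball volume 0 hx0, finrank_euclideanSpace_fin,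
        ENNReal.toReal_mul, ENNReal.toReal_ofReal (by positivity)]
    have hpow : ‖x‖ ≤ ‖x‖ ^ n := le_self_pow₀ hx1 hn.ne'
    have hV : c ^ 2 / s₀ ^ 2 + 1 ≤ ‖x‖ ^ n * B := by
      have h1 : (c ^ 2 / s₀ ^ 2 + 1) / B ≤ ‖x‖ := le_trans (le_max_right _ _) hx
      have h2 : c ^ 2 / s₀ ^ 2 + 1 ≤ ‖x‖ * B := by
        rw [div_le_iff₀ hBpos] at h1; linarith
      nlinarith
    have hkey := key m x
    rw [hvol] at hkey
    have hu2lt : (u m x) ^ 2 < s₀ ^ 2 := by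
      have hs2 : 0 < s₀ ^ 2 := by positivity
      have h3 : c ^ 2 / s₀ ^ 2 < ‖x‖ ^ n * B := by linarith
      rw [div_lt_iff₀ hs2] at h3
      nlinarith [sq_nonneg (u m x), hu0 m x]
    nlinarith [hu0 m x, hs₀]
  -- extract the null exceptional set
  set P : ℝ → Prop := fun r => ∀ t : ℝ, 0 ≤ t → t < s₀ → F r t ≤ ε' * t ^ 2 with hP
  have hNnull : volume ({r : ℝ | ¬ P r} ∩ Set.Ici R₀) = 0 := by
    have := hae
    rw [ae_iff] at this
    rwa [Measure.restrict_apply' measurableSet_Ici] at this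
  obtain ⟨N', hsub, hN'm, hN'0⟩ := exists_measurable_superset_of_null hNnull
  have hXnull : volume {x : EuclideanSpace ℝ (Fin n) | ‖x‖ ∈ N'} = 0 := norm_mem_null hn hN'm hN'0
  -- final estimate
  refine ⟨max R₀ R₂, fun R hR m => ?_⟩
  set S : Set (EuclideanSpace ℝ (Fin n)) := {x : EuclideanSpace ℝ (Fin n) | R < ‖x‖} with hS
  have haeS : ∀ᵐ x ∂(volume.restrict S),
      ENNReal.ofReal (F ‖x‖ (u m x)) ≤ ENNReal.ofReal (ε' * (u m x) ^ 2) := by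
    have hSm : MeasurableSet S := measurableSet_lt measurable_const measurable_norm
    have h1 : ∀ᵐ x ∂(volume.restrict S), ‖x‖ ∉ N' := by
      refine ae_restrict_of_ae ?_
      rw [ae_iff]
      simpa using hXnull
    filter_upwards [h1, ae_restrict_mem hSm] with x hx hxS
    have hRx : R < ‖x‖ := hxS
    have hR₀x : R₀ ≤ ‖x‖ :=
      le_trans (le_trans (le_max_left _ _) hR) hRx.le
    have hR₂x : R₂ ≤ ‖x‖ :=
      le_trans (le_trans (le_max_right _ _) hR) hRx.le
    have hPx : P ‖x‖ := by
      by_contra hcon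
      exact hx (hsub ⟨hcon, hR₀x⟩)
    exact ENNReal.ofReal_le_ofReal
      (hPx (u m x) (hu0 m x) (hsmall x hR₂x m))
  calc (∫⁻ x in S, ENNReal.ofReal (F ‖x‖ (u m x)))
      ≤ ∫⁻ x in S, ENNReal.ofReal (ε' * (u m x) ^ 2) := lintegral_mono_ae haeS
    _ ≤ ∫⁻ x, ENNReal.ofReal (ε' * (u m x) ^ 2) := setLIntegral_le_lintegral _ _
    _ = ENNReal.ofReal (∫ x, ε' * (u m x) ^ 2) := by
        rw [ofReal_integral_eq_lintegral_ofReal ((hint m).const_mul ε')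
          (Filter.Eventually.of_forall fun y => by positivity)]
    _ = ENNReal.ofReal ε := by
        rw [integral_const_mul, hnorm m, hε'def, div_mul_cancel₀ _ hc2.ne']
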